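/- Let n' ≥ 6 and let π be a bijection between two sets V₁, V₂ of labeled vertices with |V₁| = |V₂| = n'. Suppose π has exactly b non-fixed points (vertices v with label(π(v)) ≠ label(v)). Then the number of non-fixed pairs of the induced bijection σ_π on unordered pairs (pairs {u,v} with {label(π(u)), label(π(v))} ≠ {label(u), label(v)}) is at least b(n' - 1 - b/2), which in turn is at least n'·b/3. -/

import Mathlib

open Finset

private lemma aux_count {W V : Type*} [Fintype W] [DecidableEq W] [DecidableEq V]
    (f g : W → V) (hg : Function.Injective g)
    (n' b m : ℕ) (hcard : Fintype.card W = n')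
    (hb : b = Fintype.card {v : W // f v ≠ g v})
    (hm : m = Fintype.card {p : Sym2 W // ¬ p.IsDiag ∧ p.map f ≠ p.map g}) :
    b ≤ n' ∧ ∃ s : ℕ, 2 * s ≤ b ∧ s ≤ b.choose 2 ∧
      b * (n' - b) + (b.choose 2 - s) ≤ m := by
  classical
  set N : Finset W := univ.filter (fun v => f v ≠ g v) with hN_def
  have hmemN : ∀ v : W, v ∈ N ↔ f v ≠ g v := by
    intro v; simp [hN_def]
  have hbN : N.card = b := by rw [hb, Fintype.card_subtype]
  have hbn : b ≤ n' := by
    rw [← hbN, ← hcard, ← card_univ]; exact card_filter_le _ _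
  refine ⟨hbn, ?_⟩
  set Bad : Finset (Sym2 W) :=
    univ.filter (fun p => ¬ p.IsDiag ∧ p.map f ≠ p.map g) with hBad_def
  have hmB : Bad.card = m := by rw [hm, Fintype.card_subtype]
  -- mixed pairs
  set Mixed : Finset (Sym2 W) := (N ×ˢ Nᶜ).image Sym2.mk.uncurry with hMixed_def
  have hMixedCard : Mixed.card = b * (n' - b) := by
    rw [hMixed_def, card_image_of_injOn, card_product, hbN, card_compl, hbN, hcard]
    rintro ⟨u, w⟩ hu ⟨u', w'⟩ hu' h
    rw [mem_coe, mem_product] at hu hu'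
    rcases Sym2.mk_eq_mk_iff.mp h with h' | h'
    · exact h'
    · exfalso
      have h1 : u = w' := (Prod.ext_iff.mp h').1
      have hw' : w' ∉ N := by simpa using hu'.2
      exact hw' (h1 ▸ hu.1)
  have hMixedBad : Mixed ⊆ Bad := by
    intro p hp
    rw [hMixed_def, mem_image] at hp
    obtain ⟨⟨u, w⟩, huw, rfl⟩ := hp
    rw [mem_product] at huw
    have hu := (hmemN u).mp huw.1
    have hw : f w = g w := by
      have := huw.2; rw [mem_compl, hmemN, not_not] at this; exact this
    have huw' : u ≠ w := by rintro rfl; exact hu hw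
    rw [hBad_def, mem_filter]
    refine ⟨mem_univ _, ?_, ?_⟩
    · exact fun h => huw' (Sym2.mk_isDiag_iff.mp h)
    · simp only [Function.uncurry_apply_pair, Sym2.map_pair_eq]
      intro h
      rcases (Sym2.mk_eq_mk_iff (p := (f u, f w)) (q := (g u, g w))).mp h with h' | h'
      · exact hu (Prod.ext_iff.mp h').1
      · have h1 : f u = g w := (Prod.ext_iff.mp h').1
        have h2 : f w = g u := (Prod.ext_iff.mp h').2
        rw [hw] at h2
        exact huw' (hg h2).symm
  -- pairs inside N
  set NoffDiag : Finset (Sym2 W) := N.offDiag.image Sym2.mk.uncurry with hNoff_def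
  have hNoffCard : NoffDiag.card = b.choose 2 := by
    rw [hNoff_def, Sym2.card_image_offDiag, hbN]
  set Swap : Finset (Sym2 W) := NoffDiag.filter (fun p => p.map f = p.map g) with hSwap_def
  set NBad : Finset (Sym2 W) := NoffDiag \ Swap with hNBad_def
  have hSwapSub : Swap ⊆ NoffDiag := filter_subset _ _
  have hNBadCard : NBad.card = b.choose 2 - Swap.card := by
    rw [hNBad_def, card_sdiff_of_subset hSwapSub, hNoffCard]
  have hSwapLe : Swap.card ≤ b.choose 2 := hNoffCard ▸ card_le_card hSwapSub
  -- key structure of swap pairs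
  have key : ∀ p ∈ Swap, ∀ a, a ∈ p → a ∈ N ∧ ∃ c, p = s(a, c) ∧ f a = g c := by
    intro p hp a ha
    rw [hSwap_def, mem_filter] at hp
    obtain ⟨hp1, hp2⟩ := hp
    rw [hNoff_def, mem_image] at hp1
    obtain ⟨⟨x, y⟩, hxy, rfl⟩ := hp1
    rw [mem_offDiag] at hxy
    obtain ⟨hx, hy, hxyne⟩ := hxy
    rw [Function.uncurry_apply_pair, Sym2.map_pair_eq, Sym2.map_pair_eq] at hp2
    have hcross : f x = g y ∧ f y = g x := by
      rcases (Sym2.mk_eq_mk_iff (p := (f x, f y)) (q := (g x, g y))).mp hp2 with h' | h'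
      · exact absurd (Prod.ext_iff.mp h').1 ((hmemN x).mp hx)
      · exact ⟨(Prod.ext_iff.mp h').1, (Prod.ext_iff.mp h').2⟩
    rcases Sym2.mem_iff.mp ha with rfl | rfl
    · exact ⟨hx, y, rfl, hcross.1⟩
    · exact ⟨hy, x, Sym2.eq_swap, hcross.2⟩
  set elems : Sym2 W → Finset W := fun p => univ.filter (· ∈ p) with helems_def
  have helems2 : ∀ p ∈ Swap, (elems p).card = 2 := by
    intro p hp
    have hp' := hSwapSub hp
    rw [hNoff_def, mem_image] at hp'
    obtain ⟨⟨x, y⟩, hxy, rfl⟩ := hp'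
    rw [mem_offDiag] at hxy
    have : elems s(x, y) = {x, y} := by
      ext a; simp [helems_def, Sym2.mem_iff]
    rw [Function.uncurry_apply_pair, this, card_insert_of_notMem (by simp [hxy.2.2]), card_singleton]
  have hdisj : (Swap : Set (Sym2 W)).PairwiseDisjoint elems := by
    intro p hp q hq hpq
    simp only [Function.onFun]
    rw [Finset.disjoint_left]
    intro a hap haq
    rw [helems_def, mem_filter] at hap haq
    obtain ⟨-, c, rfl, hc⟩ := key p (mem_coe.mp hp) a hap.2
    obtain ⟨-, d, hqd, hd⟩ := key q (mem_coe.mp hq) a haq.2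
    have : c = d := hg (hc.symm.trans hd)
    exact hpq (by rw [hqd, this])
  have hbiU : Swap.biUnion elems ⊆ N := by
    intro a ha
    rw [mem_biUnion] at ha
    obtain ⟨p, hp, hap⟩ := ha
    rw [helems_def, mem_filter] at hap
    exact (key p hp a hap.2).1
  have hswap2 : 2 * Swap.card ≤ b := by
    have h1 : (Swap.biUnion elems).card = ∑ p ∈ Swap, (elems p).card :=
      card_biUnion hdisj
    have h2 : ∑ p ∈ Swap, (elems p).card = 2 * Swap.card := by
      rw [Finset.sum_congr rfl helems2, Finset.sum_const, smul_eq_mul, mul_comm]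
    calc 2 * Swap.card = (Swap.biUnion elems).card := by rw [h1, h2]
      _ ≤ N.card := card_le_card hbiU
      _ = b := hbN
  -- NBad ⊆ Bad
  have hNBadBad : NBad ⊆ Bad := by
    intro p hp
    rw [hNBad_def, mem_sdiff] at hp
    obtain ⟨hp1, hp2⟩ := hp
    have hne : ¬ p.map f = p.map g := by
      intro h; exact hp2 (by rw [hSwap_def, mem_filter]; exact ⟨hp1, h⟩)
    rw [hNoff_def, mem_image] at hp1
    obtain ⟨⟨x, y⟩, hxy, rfl⟩ := hp1
    rw [mem_offDiag] at hxy
    rw [hBad_def, mem_filter]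
    exact ⟨mem_univ _, fun h => hxy.2.2 (Sym2.mk_isDiag_iff.mp h), hne⟩
  -- disjointness of Mixed and NBad
  have hMixNBad : Disjoint Mixed NBad := by
    rw [Finset.disjoint_left]
    intro p hpM hpN
    rw [hMixed_def, mem_image] at hpM
    obtain ⟨⟨u, w⟩, huw, hpuw⟩ := hpM
    rw [mem_product] at huw
    rw [hNBad_def, mem_sdiff, hNoff_def, mem_image] at hpN
    obtain ⟨⟨x, y⟩, hxy, hpxy⟩ := hpN.1
    rw [mem_offDiag] at hxy
    have hw : w ∈ s(x, y) := by rw [show s(x, y) = p from hpxy, ← hpuw]; exact Sym2.mem_mk_right u w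
    have hwN : w ∈ N := by
      rcases Sym2.mem_iff.mp hw with rfl | rfl
      exacts [hxy.1, hxy.2.1]
    have := huw.2
    rw [mem_compl] at this
    exact this hwN
  refine ⟨Swap.card, hswap2, hSwapLe, ?_⟩
  calc b * (n' - b) + (b.choose 2 - Swap.card)
      = Mixed.card + NBad.card := by rw [hMixedCard, hNBadCard]
    _ = (Mixed ∪ NBad).card := (card_union_of_disjoint hMixNBad).symm
    _ ≤ Bad.card := card_le_card (union_subset hMixedBad hNBadBad)
    _ = m := hmB

/-- Lemma 2.1 (non-fixed pairs): if a bijection `π` between two `n'`-element vertex sets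
`V₁, V₂ ⊆ V` (with `n' ≥ 6`) has exactly `b` non-fixed points (`π v ≠ v`), then the number of
non-fixed unordered pairs of the induced bijection `σ_π` is at least `b(n' - 1 - b/2) ≥ n'·b/3`. -/
theorem nonfixed_pairs_lower_bound {V : Type*} [DecidableEq V]
    (V₁ V₂ : Finset V) (n' : ℕ) (hn' : 6 ≤ n')
    (hV₁ : V₁.card = n') (hV₂ : V₂.card = n')
    (π : {x // x ∈ V₁} ≃ {x // x ∈ V₂}) (b : ℕ)
    (hb : b = Fintype.card {v : {x // x ∈ V₁} // (π v : V) ≠ (v : V)})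
    (m_b : ℕ)
    (hm : m_b = Fintype.card {p : Sym2 {x // x ∈ V₁} //
        ¬ p.IsDiag ∧ p.map (fun v => (π v : V)) ≠ p.map (fun (v : {x // x ∈ V₁}) => (v : V))}) :
    (b : ℚ) * (n' - 1 - b / 2) ≤ m_b ∧ (n' : ℚ) * b / 3 ≤ b * (n' - 1 - b / 2) := by
  classical
  have hg : Function.Injective (fun (v : {x // x ∈ V₁}) => (v : V)) :=
    fun a b h => Subtype.ext h
  have hcard : Fintype.card {x // x ∈ V₁} = n' := by rw [Fintype.card_coe, hV₁]
  obtain ⟨hbn, s, hs2, hsle, hcount⟩ :=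
    aux_count (fun v => (π v : V)) (fun v => (v : V)) hg n' b m_b hcard hb hm
  have hb0 : (0:ℚ) ≤ b := Nat.cast_nonneg b
  have hbn' : (b:ℚ) ≤ n' := by exact_mod_cast hbn
  have h6 : (6:ℚ) ≤ n' := by exact_mod_cast hn'
  have hs2' : (s:ℚ) ≤ (b:ℚ) / 2 := by
    have : (2 * s : ℚ) ≤ b := by exact_mod_cast hs2
    linarith
  have hcount' : (b:ℚ) * ((n':ℚ) - b) + ((b:ℚ) * (b - 1) / 2 - s) ≤ m_b := by
    have := hcount
    have hc : ((b * (n' - b) + (b.choose 2 - s) : ℕ) : ℚ) ≤ (m_b : ℚ) := by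
      exact_mod_cast this
    rw [Nat.cast_add, Nat.cast_mul, Nat.cast_sub hbn, Nat.cast_sub hsle,
      Nat.cast_choose_two] at hc
    exact hc
  constructor
  · nlinarith [hcount', hs2']
  · nlinarith [mul_nonneg hb0 (by linarith : (0:ℚ) ≤ (n':ℚ) - 6),
      mul_nonneg hb0 (by linarith : (0:ℚ) ≤ (n':ℚ) - b)]
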